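/- Let N be a finite set of items partitioned into m parts, each of which is packable into the bin of width W and height H, and let w̃, h̃ : N → ℝ≥0 be conservative scales for N. Then m >= (Σ_{j∈N} w̃_j · h̃_j)/(W·H). In particular, the ceiling of Σ_{j∈N} w̃_j h̃_j/(W·H) is a valid lower bound on the optimal number of bins of the two-dimensional bin packing problem. -/

import Mathlib

/-- A packing of the finite set `S` of items into a bin of width `W` and height `H`:
coordinates `x y` place each item inside the bin and the open rectangles of distinct
items are disjoint. -/
def IsPacking {ι : Type*} (w h : ι → ℝ) (W H : ℝ) (S : Finset ι) (x y : ι → ℝ) : Prop :=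
  (∀ j ∈ S, 0 ≤ x j ∧ x j + w j ≤ W ∧ 0 ≤ y j ∧ y j + h j ≤ H) ∧
  ∀ i ∈ S, ∀ j ∈ S, i ≠ j →
    Disjoint (Set.Ioo (x i) (x i + w i) ×ˢ Set.Ioo (y i) (y i + h i))
             (Set.Ioo (x j) (x j + w j) ×ˢ Set.Ioo (y j) (y j + h j))

/-- `S` is packable into the bin of width `W` and height `H`. -/
def Packable {ι : Type*} (w h : ι → ℝ) (W H : ℝ) (S : Finset ι) : Prop :=
  ∃ x y : ι → ℝ, IsPacking w h W H S x y

open scoped Classical in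
noncomputable def newY {ι : Type*} [DecidableEq ι] (S : Finset ι) (y v' : ι → ℝ)
    (R : ι → ι → Prop) (j : ι) : ℝ :=
  (S.filter (fun i => R i j ∧ y i < y j)).attach.fold max 0
    (fun i => newY S y v' R i.1 + v' i.1)
termination_by (S.filter (fun i => y i < y j)).card
decreasing_by
  obtain ⟨hiS, -, hyi⟩ := Finset.mem_filter.mp i.2
  apply Finset.card_lt_card
  rw [Finset.ssubset_iff_of_subset (fun k hk => by
      obtain ⟨hkS, hky⟩ := Finset.mem_filter.mp hk
      exact Finset.mem_filter.mpr ⟨hkS, hky.trans hyi⟩)]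
  exact ⟨i.1, Finset.mem_filter.mpr ⟨hiS, hyi⟩,
    fun hmem => lt_irrefl _ (Finset.mem_filter.mp hmem).2⟩

open scoped Classical in
lemma newY_nonneg {ι : Type*} [DecidableEq ι] (S : Finset ι) (y v' : ι → ℝ)
    (R : ι → ι → Prop) (j : ι) : 0 ≤ newY S y v' R j := by
  rw [newY, Finset.le_fold_max]
  exact Or.inl le_rfl

open scoped Classical in
lemma newY_le {ι : Type*} [DecidableEq ι] (S : Finset ι) (y v' : ι → ℝ)
    (R : ι → ι → Prop) {i j : ι} (hi : i ∈ S) (hR : R i j) (hy : y i < y j) :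
    newY S y v' R i + v' i ≤ newY S y v' R j := by
  conv_rhs => rw [newY]
  rw [Finset.le_fold_max]
  exact Or.inr ⟨⟨i, Finset.mem_filter.mpr ⟨hi, hR, hy⟩⟩, Finset.mem_attach _ _, le_rfl⟩

lemma fold_max_mem' {α : Type*} (s : Finset α) (f : α → ℝ) (b : ℝ) :
    s.fold max b f = b ∨ ∃ x ∈ s, s.fold max b f = f x := by
  classical
  induction s using Finset.induction_on with
  | empty => exact Or.inl (by simp)
  | insert _ _ h ih =>
    rename_i a s
    rw [Finset.fold_insert h]
    rcases max_choice (f a) (s.fold max b f) with h1 | h1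
    · exact Or.inr ⟨a, Finset.mem_insert_self _ _, h1⟩
    · rcases ih with h2 | ⟨x, hx, h2⟩
      · exact Or.inl (h1.trans h2)
      · exact Or.inr ⟨x, Finset.mem_insert_of_mem hx, h1.trans h2⟩

open scoped Classical in
lemma newY_chain {ι : Type*} [DecidableEq ι] (S : Finset ι) (y v v' : ι → ℝ)
    (R : ι → ι → Prop)
    (hv : ∀ i ∈ S, 0 < v i)
    (hR : ∀ i ∈ S, ∀ j, R i j → y i + v i ≤ y j)
    (hy0 : ∀ i ∈ S, 0 ≤ y i) :
    ∀ j, 0 ≤ y j → ∃ C : Finset ι, C ⊆ S ∧ (∀ k ∈ C, y k + v k ≤ y j) ∧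
      (∑ k ∈ C, v' k) = newY S y v' R j ∧ (∑ k ∈ C, v k) ≤ y j := by
  suffices h : ∀ n : ℕ, ∀ j, (S.filter (fun k => y k < y j)).card < n → 0 ≤ y j →
      ∃ C : Finset ι, C ⊆ S ∧ (∀ k ∈ C, y k + v k ≤ y j) ∧
      (∑ k ∈ C, v' k) = newY S y v' R j ∧ (∑ k ∈ C, v k) ≤ y j by
    intro j hj
    exact h ((S.filter (fun k => y k < y j)).card + 1) j (Nat.lt_succ_self _) hj
  intro n
  induction n with
  | zero => exact fun j hj => absurd hj (Nat.not_lt_zero _)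
  | succ n ih =>
    intro j hcard hyj
    rcases fold_max_mem' ((S.filter (fun i => R i j ∧ y i < y j)).attach)
        (fun i => newY S y v' R i.1 + v' i.1) 0 with h0 | ⟨i, -, hival⟩
    · refine ⟨∅, Finset.empty_subset _, by simp, ?_, by simpa⟩
      rw [newY]
      simpa using h0.symm
    · obtain ⟨hiS, hRij, hyij⟩ := Finset.mem_filter.mp i.2
      have hicard : (S.filter (fun k => y k < y i.1)).card < n := by
        have hlt : (S.filter (fun k => y k < y i.1)).card <
            (S.filter (fun k => y k < y j)).card := by
          apply Finset.card_lt_card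
          rw [Finset.ssubset_iff_of_subset (fun k hk => by
              obtain ⟨hkS, hky⟩ := Finset.mem_filter.mp hk
              exact Finset.mem_filter.mpr ⟨hkS, hky.trans hyij⟩)]
          exact ⟨i.1, Finset.mem_filter.mpr ⟨hiS, hyij⟩,
            fun hmem => lt_irrefl _ (Finset.mem_filter.mp hmem).2⟩
        omega
      obtain ⟨C, hCS, hCk, hCv', hCv⟩ := ih i.1 hicard (hy0 i.1 hiS)
      have hiC : i.1 ∉ C := fun hmem => by
        have := hCk i.1 hmem
        have := hv i.1 hiS
        linarith
      have hvi := hv i.1 hiS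
      have hRi := hR i.1 hiS j hRij
      refine ⟨insert i.1 C, Finset.insert_subset hiS hCS, ?_, ?_, ?_⟩
      · intro k hk
        rcases Finset.mem_insert.mp hk with rfl | hk
        · exact hRi
        · exact (hCk k hk).trans (le_of_lt hyij)
      · rw [Finset.sum_insert hiC, hCv']
        conv_rhs => rw [newY]
        linarith [hival]
      · rw [Finset.sum_insert hiC]
        linarith

/-- Disjoint nonempty open intervals are ordered. -/
lemma ioo_disjoint_order {a b c d : ℝ} (hab : a < b) (hcd : c < d)
    (hdis : Disjoint (Set.Ioo a b) (Set.Ioo c d)) : b ≤ c ∨ d ≤ a := by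
  by_contra hcon
  push_neg at hcon
  obtain ⟨h1, h2⟩ := hcon
  have hlt : max a c < min b d := by
    rw [max_lt_iff, lt_min_iff, lt_min_iff]
    exact ⟨⟨hab, h2⟩, ⟨h1, hcd⟩⟩
  set t := (max a c + min b d) / 2 with ht
  have hta : t ∈ Set.Ioo a b := by
    constructor
    · have := le_max_left a c; have := min_le_left b d
      simp only [ht]; linarith
    · have := le_max_left a c; have := min_le_left b d
      simp only [ht]; linarith
  have htc : t ∈ Set.Ioo c d := by
    constructor
    · have := le_max_right a c; have := min_le_right b d
      simp only [ht]; linarith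
    · have := le_max_right a c; have := min_le_right b d
      simp only [ht]; linarith
  exact Set.disjoint_left.mp hdis hta htc

/-- Rescaling the second dimension of a packing by a conservative scale. -/
lemma repack {ι : Type*} [DecidableEq ι] (u v v' : ι → ℝ) (W H : ℝ) (S : Finset ι)
    (hv : ∀ j, 0 < v j)
    (hcs : ∀ C ⊆ S, ∑ j ∈ C, v j ≤ H → ∑ j ∈ C, v' j ≤ H)
    (hp : Packable u v W H S) : Packable u v' W H S := by
  classical
  obtain ⟨x, y, hin, hdisj⟩ := hp
  set R : ι → ι → Prop := fun i j => i ∈ S ∧ j ∈ S ∧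
    (Set.Ioo (x i) (x i + u i) ∩ Set.Ioo (x j) (x j + u j)).Nonempty ∧
    y i + v i ≤ y j with hRdef
  set y' : ι → ℝ := newY S y v' R with hy'
  have hR : ∀ i ∈ S, ∀ j, R i j → y i + v i ≤ y j := fun i _ j hij => hij.2.2.2
  have hy0 : ∀ i ∈ S, 0 ≤ y i := fun i hi => (hin i hi).2.2.1
  -- upper bound for new coordinates
  have hub : ∀ j ∈ S, y' j + v' j ≤ H := by
    intro j hj
    obtain ⟨C, hCS, hCk, hCv', hCv⟩ :=
      newY_chain S y v v' R (fun i hi => hv i) hR hy0 j (hy0 j hj)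
    have hjC : j ∉ C := fun hmem => by
      have := hCk j hmem; have := hv j; linarith
    have hsum : ∑ k ∈ insert j C, v k ≤ H := by
      rw [Finset.sum_insert hjC]
      have := (hin j hj).2.2.2
      linarith
    have := hcs (insert j C) (Finset.insert_subset hj hCS) hsum
    rw [Finset.sum_insert hjC, hCv'] at this
    linarith
  refine ⟨x, y', fun j hj => ⟨(hin j hj).1, (hin j hj).2.1,
    newY_nonneg S y v' R j, hub j hj⟩, ?_⟩
  intro i hi j hj hij
  by_cases hxo : (Set.Ioo (x i) (x i + u i) ∩ Set.Ioo (x j) (x j + u j)).Nonempty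
  · -- x-intervals overlap: y-intervals of the original packing are disjoint
    obtain ⟨a, hai, haj⟩ := hxo
    have hydis : Disjoint (Set.Ioo (y i) (y i + v i)) (Set.Ioo (y j) (y j + v j)) := by
      rw [Set.disjoint_left]
      intro b hbi hbj
      exact Set.disjoint_left.mp (hdisj i hi j hj hij)
        (Set.mk_mem_prod hai hbi) (Set.mk_mem_prod haj hbj)
    have hyiv : y i < y i + v i := by linarith [hv i]
    have hyjv : y j < y j + v j := by linarith [hv j]
    rcases ioo_disjoint_order hyiv hyjv hydis with hord | hord
    · have hRij : R i j := ⟨hi, hj, ⟨a, hai, haj⟩, hord⟩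
      have hkey : y' i + v' i ≤ y' j :=
        newY_le S y v' R hi hRij (by linarith [hv i])
      rw [Set.disjoint_left]
      rintro ⟨p1, p2⟩ hp1 hp2
      simp only [Set.mem_prod, Set.mem_Ioo] at hp1 hp2
      linarith [hp1.2.2, hp2.2.1]
    · have hRji : R j i := ⟨hj, hi, ⟨a, haj, hai⟩, hord⟩
      have hkey : y' j + v' j ≤ y' i :=
        newY_le S y v' R hj hRji (by linarith [hv j])
      rw [Set.disjoint_left]
      rintro ⟨p1, p2⟩ hp1 hp2
      simp only [Set.mem_prod, Set.mem_Ioo] at hp1 hp2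
      linarith [hp1.2.1, hp2.2.2]
  · -- x-intervals disjoint
    rw [Set.disjoint_left]
    rintro ⟨p1, p2⟩ hp1 hp2
    simp only [Set.mem_prod, Set.mem_Ioo] at hp1 hp2
    exact hxo ⟨p1, Set.mem_Ioo.mpr hp1.1, Set.mem_Ioo.mpr hp2.1⟩

lemma packable_swap {ι : Type*} {w h : ι → ℝ} {W H : ℝ} {S : Finset ι}
    (hp : Packable w h W H S) : Packable h w H W S := by
  obtain ⟨x, y, h1, h2⟩ := hp
  refine ⟨y, x, fun j hj => ⟨(h1 j hj).2.2.1, (h1 j hj).2.2.2, (h1 j hj).1, (h1 j hj).2.1⟩, ?_⟩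
  intro i hi j hj hij
  have := h2 i hi j hj hij
  rw [Set.disjoint_left] at this ⊢
  rintro ⟨p1, p2⟩ hp1 hp2
  simp only [Set.mem_prod] at hp1 hp2
  exact this (a := (p2, p1)) ⟨hp1.2, hp1.1⟩ ⟨hp2.2, hp2.1⟩

lemma area_le {ι : Type*} (u v : ι → ℝ) (W H : ℝ) (S : Finset ι)
    (hu : ∀ j ∈ S, 0 ≤ u j) (hv : ∀ j ∈ S, 0 ≤ v j) (hW : 0 ≤ W) (hH : 0 ≤ H)
    (hp : Packable u v W H S) : ∑ j ∈ S, u j * v j ≤ W * H := by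
  classical
  obtain ⟨x, y, hin, hd⟩ := hp
  set f : ι → Set (ℝ × ℝ) :=
    fun j => Set.Ioo (x j) (x j + u j) ×ˢ Set.Ioo (y j) (y j + v j) with hf
  have hmeas : ∀ j, MeasurableSet (f j) :=
    fun j => measurableSet_Ioo.prod measurableSet_Ioo
  have hPD : (↑S : Set ι).PairwiseDisjoint f := fun i hi j hj hij => hd i hi j hj hij
  have h1 : ∑ j ∈ S, MeasureTheory.volume (f j) =
      MeasureTheory.volume (⋃ j ∈ S, f j) :=
    (MeasureTheory.measure_biUnion_finset hPD (fun j _ => hmeas j)).symm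
  have h2 : (⋃ j ∈ S, f j) ⊆ Set.Icc 0 W ×ˢ Set.Icc 0 H := by
    intro p hp'
    simp only [Set.mem_iUnion] at hp'
    obtain ⟨j, hj, hpj⟩ := hp'
    obtain ⟨hpx, hpy⟩ := hpj
    obtain ⟨c1, c2, c3, c4⟩ := hin j hj
    constructor
    · exact ⟨le_of_lt (lt_of_le_of_lt c1 hpx.1), le_of_lt (lt_of_lt_of_le hpx.2 c2)⟩
    · exact ⟨le_of_lt (lt_of_le_of_lt c3 hpy.1), le_of_lt (lt_of_lt_of_le hpy.2 c4)⟩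
  have h3 : MeasureTheory.volume (Set.Icc (0:ℝ) W ×ˢ Set.Icc (0:ℝ) H) =
      ENNReal.ofReal (W * H) := by
    rw [MeasureTheory.Measure.volume_eq_prod, MeasureTheory.Measure.prod_prod,
      Real.volume_Icc, Real.volume_Icc, sub_zero, sub_zero, ENNReal.ofReal_mul hW]
  have h4 : ∀ j ∈ S, MeasureTheory.volume (f j) = ENNReal.ofReal (u j * v j) := by
    intro j hj
    rw [hf]
    simp only
    rw [MeasureTheory.Measure.volume_eq_prod, MeasureTheory.Measure.prod_prod,
      Real.volume_Ioo, Real.volume_Ioo, add_sub_cancel_left, add_sub_cancel_left,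
      ← ENNReal.ofReal_mul (hu j hj)]
  have h5 : ENNReal.ofReal (∑ j ∈ S, u j * v j) ≤ ENNReal.ofReal (W * H) := by
    rw [ENNReal.ofReal_sum_of_nonneg]
    · rw [← h3]
      calc ∑ j ∈ S, ENNReal.ofReal (u j * v j)
          = ∑ j ∈ S, MeasureTheory.volume (f j) :=
            Finset.sum_congr rfl (fun j hj => (h4 j hj).symm)
        _ = MeasureTheory.volume (⋃ j ∈ S, f j) := h1
        _ ≤ _ := MeasureTheory.measure_mono h2
    · exact fun j hj => mul_nonneg (hu j hj) (hv j hj)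
  rwa [ENNReal.ofReal_le_ofReal_iff (mul_nonneg hW hH)] at h5


theorem stmt_11 {ι : Type*} [DecidableEq ι] (w h : ι → ℝ) (W H : ℝ)
    (hW : 0 < W) (hH : 0 < H) (hw : ∀ j, 0 < w j) (hh : ∀ j, 0 < h j)
    (N : Finset ι)
    (w' h' : ι → ℝ) (hw' : ∀ j ∈ N, 0 ≤ w' j) (hh' : ∀ j ∈ N, 0 ≤ h' j)
    (hcsW : ∀ S ⊆ N, ∑ j ∈ S, w j ≤ W → ∑ j ∈ S, w' j ≤ W)
    (hcsH : ∀ S ⊆ N, ∑ j ∈ S, h j ≤ H → ∑ j ∈ S, h' j ≤ H)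
    (m : ℕ) (P : Finset (Finset ι)) (hm : P.card = m)
    (hdisj : ∀ S ∈ P, ∀ T ∈ P, S ≠ T → Disjoint S T)
    (hsub : ∀ S ∈ P, S ⊆ N)
    (hcover : ∀ j ∈ N, ∃ S ∈ P, j ∈ S)
    (hpack : ∀ S ∈ P, Packable w h W H S) :
    (∑ j ∈ N, w' j * h' j) / (W * H) ≤ (m : ℝ) ∧
    ⌈(∑ j ∈ N, w' j * h' j) / (W * H)⌉ ≤ (m : ℤ) := by
  have key : ∀ S ∈ P, ∑ j ∈ S, w' j * h' j ≤ W * H := by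
    intro S hS
    have hSN := hsub S hS
    have p1 : Packable h w H W S := packable_swap (hpack S hS)
    have p2 : Packable h w' H W S :=
      repack h w w' H W S hw (fun C hC => hcsW C (hC.trans hSN)) p1
    have p3 : Packable w' h W H S := packable_swap p2
    have p4 : Packable w' h' W H S :=
      repack w' h h' W H S hh (fun C hC => hcsH C (hC.trans hSN)) p3
    exact area_le w' h' W H S (fun j hj => hw' j (hSN hj)) (fun j hj => hh' j (hSN hj))
      hW.le hH.le p4
  have hN : N = P.biUnion id := by
    ext j
    simp only [Finset.mem_biUnion, id]
    exact ⟨fun hj => hcover j hj, fun ⟨S, hS, hj⟩ => hsub S hS hj⟩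
  have hsum : ∑ j ∈ N, w' j * h' j = ∑ S ∈ P, ∑ j ∈ S, w' j * h' j := by
    rw [hN]
    exact Finset.sum_biUnion (fun s hs t ht hst => hdisj s hs t ht hst)
  have htot : ∑ j ∈ N, w' j * h' j ≤ (m : ℝ) * (W * H) := by
    rw [hsum]
    calc ∑ S ∈ P, ∑ j ∈ S, w' j * h' j ≤ ∑ _S ∈ P, (W * H) := Finset.sum_le_sum key
      _ = P.card * (W * H) := by rw [Finset.sum_const, nsmul_eq_mul]
      _ = (m : ℝ) * (W * H) := by rw [hm]
  have hWH : 0 < W * H := mul_pos hW hH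
  have h1 : (∑ j ∈ N, w' j * h' j) / (W * H) ≤ (m : ℝ) := by
    rw [div_le_iff₀ hWH]; exact htot
  exact ⟨h1, Int.ceil_le.mpr (by push_cast; exact h1)⟩
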